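/- For a nonzero ideal I in the formal power series ring K[[x_1,...,x_n]] over a field K of characteristic zero, and for any 0 ≤ i ≤ μ−1, the set {x : ord_x(I) ≥ μ} coincides with {x : ord_x(D^i(I)) ≥ μ−i}, where D(I) is the ideal generated by I together with all first partial derivatives of its elements, and D^i is the i-th iterate. -/

import Mathlib

/-- Coefficientwise partial derivative `∂/∂x_i` of a formal power series. -/
noncomputable def psD {K : Type*} [CommRing K] {σ : Type*} (i : σ)
    (f : MvPowerSeries σ K) : MvPowerSeries σ K :=
  fun e => ((e i + 1 : ℕ) : K) * f (e + Finsupp.single i 1)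

/-- The first derivative ideal: generated by `I` and all first partial derivatives of
elements of `I`. -/
noncomputable def psDerivIdeal {K : Type*} [CommRing K] {σ : Type*}
    (I : Ideal (MvPowerSeries σ K)) : Ideal (MvPowerSeries σ K) :=
  I ⊔ Ideal.span {g | ∃ f ∈ I, ∃ i : σ, g = psD i f}

/-- The `k`-th iterated derivative ideal. -/
noncomputable def psDerivIter {K : Type*} [CommRing K] {σ : Type*} (k : ℕ)
    (I : Ideal (MvPowerSeries σ K)) : Ideal (MvPowerSeries σ K) :=
  psDerivIdeal^[k] I

/-- `ord(f) ≥ μ` at the (closed) point: every nonzero coefficient has total degree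
at least `μ`, i.e. `f ∈ m^μ`. -/
def psOrdGE {K : Type*} [CommRing K] {σ : Type*} (f : MvPowerSeries σ K) (μ : ℕ) : Prop :=
  ∀ e : σ →₀ ℕ, f e ≠ 0 → μ ≤ e.sum fun _ v => v

section aux
variable {K : Type*} [CommRing K] {σ : Type*}

lemma sum_add (a b : σ →₀ ℕ) :
    ((a + b).sum fun _ v => v) = (a.sum fun _ v => v) + (b.sum fun _ v => v) :=
  Finsupp.sum_add_index' (fun _ => rfl) (fun _ _ _ => rfl)

lemma psOrdGE_mul (r f : MvPowerSeries σ K) {ν : ℕ} (hf : psOrdGE f ν) :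
    psOrdGE (r * f) ν := by
  classical
  intro e he
  have : MvPowerSeries.coeff e (r * f) ≠ 0 := he
  rw [MvPowerSeries.coeff_mul] at this
  obtain ⟨p, hp, hne⟩ := Finset.exists_ne_zero_of_sum_ne_zero this
  have h2 : f p.2 ≠ 0 := fun h => hne (by
    rw [show (MvPowerSeries.coeff p.2) f = f p.2 from rfl, h, mul_zero])
  have := hf p.2 h2
  have hpe : p.1 + p.2 = e := Finset.HasAntidiagonal.mem_antidiagonal.mp hp
  calc ν ≤ p.2.sum fun _ v => v := this
    _ ≤ e.sum fun _ v => v := by rw [← hpe, sum_add]; omega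

/-- Power series of order ≥ ν form an ideal. -/
noncomputable def ordIdeal (ν : ℕ) : Ideal (MvPowerSeries σ K) where
  carrier := {f | psOrdGE f ν}
  zero_mem' := fun e he => absurd rfl he
  add_mem' := by
    intro a b ha hb e he
    by_cases h : a e = 0
    · exact hb e (fun h' => he (by show a e + b e = 0; rw [h, h', add_zero]))
    · exact ha e h
  smul_mem' := fun r f hf => psOrdGE_mul r f hf

lemma psOrdGE_psD {f : MvPowerSeries σ K} {ν : ℕ} (hf : psOrdGE f ν) (j : σ) :
    psOrdGE (psD j f) (ν - 1) := by
  intro e he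
  have h2 : f (e + Finsupp.single j 1) ≠ 0 := by
    intro h; exact he (by simp [psD, h])
  have := hf _ h2
  rw [sum_add] at this
  simp [Finsupp.sum_single_index] at this
  omega

lemma le_derivIdeal (I : Ideal (MvPowerSeries σ K)) : I ≤ psDerivIdeal I := le_sup_left

lemma psD_mem {I : Ideal (MvPowerSeries σ K)} {f : MvPowerSeries σ K} (hf : f ∈ I) (j : σ) :
    psD j f ∈ psDerivIdeal I :=
  Ideal.mem_sup_right (Ideal.subset_span ⟨f, hf, j, rfl⟩)

lemma derivIdeal_le {I : Ideal (MvPowerSeries σ K)} {ν : ℕ}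
    (h : ∀ f ∈ I, psOrdGE f ν) : ∀ g ∈ psDerivIdeal I, psOrdGE g (ν - 1) := by
  have : psDerivIdeal I ≤ ordIdeal (ν - 1) := by
    apply sup_le
    · intro f hf e he
      have := h f hf e he; omega
    · rw [Ideal.span_le]
      rintro g ⟨f, hf, j, rfl⟩
      exact psOrdGE_psD (h f hf) j
  exact this

lemma forward (I : Ideal (MvPowerSeries σ K)) (μ : ℕ) (h : ∀ f ∈ I, psOrdGE f μ) :
    ∀ i, ∀ g ∈ psDerivIter i I, psOrdGE g (μ - i) := by
  intro i
  induction i with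
  | zero => simpa [psDerivIter] using h
  | succ k ih =>
    have : psDerivIter (k + 1) I = psDerivIdeal (psDerivIter k I) := by
      simp [psDerivIter, Function.iterate_succ_apply']
    rw [this]
    intro g hg
    have := derivIdeal_le ih g hg
    have heq : μ - k - 1 = μ - (k + 1) := by omega
    rwa [heq] at this

lemma backward {K : Type*} [Field K] [CharZero K] {σ : Type*}
    (I : Ideal (MvPowerSeries σ K)) (f : MvPowerSeries σ K) (hf : f ∈ I)
    (e : σ →₀ ℕ) (he : f e ≠ 0) (i : ℕ) :
    ∃ g ∈ psDerivIter i I, ∃ e' : σ →₀ ℕ, g e' ≠ 0 ∧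
      (e'.sum fun _ v => v) = (e.sum fun _ v => v) - i := by
  induction i with
  | zero => exact ⟨f, by simpa [psDerivIter] using hf, e, he, by omega⟩
  | succ k ih =>
    obtain ⟨g, hg, e', hne, hs⟩ := ih
    have hstep : psDerivIter (k + 1) I = psDerivIdeal (psDerivIter k I) := by
      simp [psDerivIter, Function.iterate_succ_apply']
    by_cases h0 : (e'.sum fun _ v => v) = 0
    · refine ⟨g, ?_, e', hne, by omega⟩
      rw [hstep]; exact le_derivIdeal _ hg
    · have hex : ∃ j, e' j ≠ 0 := by
        by_contra hc
        push_neg at hc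
        exact h0 (by rw [show e' = 0 from Finsupp.ext hc]; simp)
      obtain ⟨j, hj⟩ := hex
      have hle : Finsupp.single j 1 ≤ e' := by
        rw [Finsupp.single_le_iff]; omega
      have hadd : e' - Finsupp.single j 1 + Finsupp.single j 1 = e' :=
        tsub_add_cancel_of_le hle
      have hcoeff : (e' - Finsupp.single j 1 : σ →₀ ℕ) j + 1 = e' j := by
        classical
        simp [Finsupp.tsub_apply, Finsupp.single_apply]
        omega
      refine ⟨psD j g, by rw [hstep]; exact psD_mem hg j, e' - Finsupp.single j 1, ?_, ?_⟩
      · show (((e' - Finsupp.single j 1 : σ →₀ ℕ) j + 1 : ℕ) : K) *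
            g (e' - Finsupp.single j 1 + Finsupp.single j 1) ≠ 0
        rw [hadd, hcoeff]
        exact mul_ne_zero (Nat.cast_ne_zero.mpr hj) hne
      · have hsum := sum_add (e' - Finsupp.single j 1) (Finsupp.single j 1)
        rw [hadd] at hsum
        rw [Finsupp.sum_single_index rfl] at hsum
        omega

end aux

/-- Giraud–Villamayor: for a nonzero ideal `I` of `K[[x_1,...,x_n]]` with `char K = 0`
and `0 ≤ i ≤ μ−1`, the locus `{ord(I) ≥ μ}` coincides with `{ord(D^i(I)) ≥ μ−i}`. -/
theorem stmt_1 {K : Type*} [Field K] [CharZero K] {n : ℕ}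
    (I : Ideal (MvPowerSeries (Fin n) K)) (hI : I ≠ ⊥) (μ i : ℕ) (hi : i < μ) :
    (∀ f ∈ I, psOrdGE f μ) ↔ ∀ g ∈ psDerivIter i I, psOrdGE g (μ - i) := by
  constructor
  · intro h
    exact forward I μ h i
  · intro h
    by_contra hc
    push_neg at hc
    obtain ⟨f, hf, hford⟩ := hc
    simp only [psOrdGE, not_forall] at hford
    obtain ⟨e, hne, hlt⟩ := hford
    push_neg at hlt
    obtain ⟨g, hg, e', hne', hs⟩ := backward I f hf e hne i
    have := h g hg e' hne'
    omega
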